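/- arXiv:2306.13336 — 8 statements merged into one kernel-verified Lean document; each statement's English description precedes it below -/
import Mathlib

section
/- If A is a cubic-matrix of order 3 all of whose entries in some plane with one of the three indices fixed are zero, then det₃(A) = 0. -/
def det3 {F : Type*} [Field F] (A : Fin 3 → Fin 3 → Fin 3 → F) : F :=
  A 0 0 0 * A 1 1 1 * A 2 2 2 - A 0 0 0 * A 1 2 1 * A 2 1 2 - A 0 0 0 * A 1 1 2 * A 2 2 1 + A 0 0 0 * A 1 2 2 * A 2 1 1 - A 0 0 1 * A 1 1 0 * A 2 2 2 + A 0 0 1 * A 1 1 2 * A 2 2 0 + A 0 0 1 * A 1 2 0 * A 2 1 2 - A 0 0 1 * A 1 2 2 * A 2 1 0 + A 0 0 2 * A 1 1 0 * A 2 2 1 - A 0 0 2 * A 1 1 1 * A 2 2 0 - A 0 0 2 * A 1 2 0 * A 2 1 1 + A 0 0 2 * A 1 2 1 * A 2 1 0 - A 0 1 0 * A 1 0 1 * A 2 2 2 + A 0 1 0 * A 1 0 2 * A 2 2 1 + A 0 1 0 * A 1 2 1 * A 2 0 2 - A 0 1 0 * A 1 2 2 * A 2 0 1 + A 0 1 1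 * A 1 0 0 * A 2 2 2 - A 0 1 1 * A 1 0 2 * A 2 2 0 - A 0 1 1 * A 1 2 0 * A 2 0 2 + A 0 1 1 * A 1 2 2 * A 2 0 0 - A 0 1 2 * A 1 0 0 * A 2 2 1 + A 0 1 2 * A 1 0 1 * A 2 2 0 + A 0 1 2 * A 1 2 0 * A 2 0 1 - A 0 1 2 * A 1 2 1 * A 2 0 0 + A 0 2 0 * A 1 0 1 * A 2 1 2 - A 0 2 0 * A 1 0 2 * A 2 1 1 - A 0 2 0 * A 1 1 1 * A 2 0 2 + A 0 2 0 * A 1 1 2 * A 2 0 1 - A 0 2 1 * A 1 0 0 * A 2 1 2 + A 0 2 1 * A 1 0 2 * A 2 1 0 + A 0 2 1 * A 1 1 0 * A 2 0 2 - A 0 2 1 * A 1 1 2 * A 2 0 0 + A 0 2 2 * A 1 0 0 * A 2 1 1 - A 0 2 2 * A 1 0 1 * A 2 1 0 - A 0 2 2 * A 1 1 0 * A 2 0 1 + A 0 2 2 * A 1 1 1 * A 2 0 0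

theorem det3_zero_plane {F : Type*} [Field F]
    (A : Fin 3 → Fin 3 → Fin 3 → F)
    (h : (∃ i₀, ∀ j k, A i₀ j k = 0) ∨ (∃ j₀, ∀ i k, A i j₀ k = 0) ∨
      (∃ k₀, ∀ i j, A i j k₀ = 0)) : det3 A = 0 := by
  rcases h with ⟨i, h⟩ | ⟨i, h⟩ | ⟨i, h⟩ <;>
    rcases show i = 0 ∨ i = 1 ∨ i = 2 by omega with rfl | rfl | rfl <;>
    simp [det3, h]
end

section
/- Let A be a cubic-matrix of order 3 and let B be obtained from A by multiplying all entries of one plane (one of the three indices fixed to a given value) by a scalar α. Then det₃(B) = α · det₃(A). -/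
lemma finmk0 : (⟨0, by omega⟩ : Fin 3) = 0 := rfl
lemma finmk1 : (⟨1, by omega⟩ : Fin 3) = 1 := rfl
lemma finmk2 : (⟨2, by omega⟩ : Fin 3) = 2 := rfl

set_option maxHeartbeats 2000000 in
theorem det3_smul_plane {F : Type*} [Field F]
    (A B : Fin 3 → Fin 3 → Fin 3 → F) (α : F)
    (hB : (∃ i₀, ∀ i j k, B i j k = if i = i₀ then α * A i j k else A i j k) ∨
      (∃ j₀, ∀ i j k, B i j k = if j = j₀ then α * A i j k else A i j k) ∨
      (∃ k₀, ∀ i j k, B i j k = if k = k₀ then α * A i j k else A i j k)) :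
    det3 B = α * det3 A := by
  rcases hB with ⟨x, h⟩ | ⟨x, h⟩ | ⟨x, h⟩ <;> fin_cases x <;>
    simp only [det3, h, finmk0, finmk1, finmk2, Fin.isValue, Fin.reduceEq, ↓reduceIte] <;> ring
end

section
/- Let A be a cubic-matrix of order 2 and let B be obtained from A by interchanging its two horizontal layers (swapping the first index values 1 and 2). Then det₂(B) = det₂(A). -/
def det2 {F : Type*} [Field F] (A : Fin 2 → Fin 2 → Fin 2 → F) : F :=
  A 0 0 0 * A 1 1 1 - A 0 0 1 * A 1 1 0 - A 0 1 0 * A 1 0 1 + A 0 1 1 * A 1 0 0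

theorem det2_swap_horizontal_layers {F : Type*} [Field F]
    (A B : Fin 2 → Fin 2 → Fin 2 → F)
    (hB : ∀ i j k, B i j k = A (Equiv.swap 0 1 i) j k) :
    det2 B = det2 A := by
  simp only [det2, hB]
  norm_num [Equiv.swap_apply_of_ne_of_ne]
  ring
end

section
/- Let A be a cubic-matrix of order 3 and let B be obtained from A by interchanging two consecutive horizontal layers (swapping two values of the first index). Then det₃(B) = det₃(A). -/
theorem det3_swap_horizontal_layers {F : Type*} [Field F]
    (A B : Fin 3 → Fin 3 → Fin 3 → F) (σ : Equiv.Perm (Fin 3))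
    (hσ : σ = Equiv.swap 0 1 ∨ σ = Equiv.swap 1 2)
    (hB : ∀ i j k, B i j k = A (σ i) j k) :
    det3 B = det3 A := by
  rcases hσ with h | h <;> subst h <;>
    simp only [det3, hB, Equiv.swap_apply_left, Equiv.swap_apply_right,
      show (Equiv.swap (0:Fin 3) 1) 2 = 2 from by decide,
      show (Equiv.swap (1:Fin 3) 2) 0 = 0 from by decide] <;> ring
end

section
/- Let A be a cubic-matrix of order 2 and let B be obtained from A by interchanging its two vertical layers (swapping the third index values). Then det₂(B) = −det₂(A). -/
theorem det2_swap_vertical_layers {F : Type*} [Field F]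
    (A B : Fin 2 → Fin 2 → Fin 2 → F)
    (hB : ∀ i j k, B i j k = A i j (Equiv.swap 0 1 k)) :
    det2 B = -det2 A := by
  simp only [det2, hB]
  norm_num [Equiv.swap_apply_of_ne_of_ne]
  ring
end

section
/- Let A be a cubic-matrix of order 3 and let B be obtained from A by interchanging two consecutive vertical pages (transposing two adjacent values of the second index). Then det₃(B) = −det₃(A). -/
theorem det3_swap_vertical_pages {F : Type*} [Field F]
    (A B : Fin 3 → Fin 3 → Fin 3 → F) (σ : Equiv.Perm (Fin 3))
    (hσ : σ = Equiv.swap 0 1 ∨ σ = Equiv.swap 1 2)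
    (hB : ∀ i j k, B i j k = A i (σ j) k) :
    det3 B = -det3 A := by
  rcases hσ with h | h <;> subst h <;>
    simp only [det3, hB, Equiv.swap_apply_left, Equiv.swap_apply_right,
      show (Equiv.swap (0:Fin 3) 1) 2 = 2 from rfl,
      show (Equiv.swap (1:Fin 3) 2) 0 = 0 from rfl] <;> ring
end

section
/- Let A be a cubic-matrix of order 3 and let B be obtained from A by interchanging two consecutive vertical layers (transposing two adjacent values of the third index). Then det₃(B) = −det₃(A). -/
theorem det3_swap_vertical_layers {F : Type*} [Field F]
    (A B : Fin 3 → Fin 3 → Fin 3 → F) (σ : Equiv.Perm (Fin 3))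
    (hσ : σ = Equiv.swap 0 1 ∨ σ = Equiv.swap 1 2)
    (hB : ∀ i j k, B i j k = A i j (σ k)) :
    det3 B = -det3 A := by
  have e1 : ∀ k : Fin 3, Equiv.swap (0:Fin 3) 1 k = ![1,0,2] k := by decide
  have e2 : ∀ k : Fin 3, Equiv.swap (1:Fin 3) 2 k = ![0,2,1] k := by decide
  rcases hσ with h | h <;> subst h <;>
    simp only [det3, hB, e1, e2, Matrix.cons_val_zero, Matrix.cons_val_one,
      Matrix.head_cons, Matrix.cons_val_two, Matrix.tail_cons] <;> ring
end

section
/- The determinant det₃ of a cubic-matrix of order 3 satisfies the Laplace-type expansion along the first horizontal layer: det₃(A) = Σ_{j,k} (−1)^{j+k} · a_{1jk} · det₂(M_{jk}), where M_{jk} is the order-2 cubic-matrix obtained from A by deleting the horizontal layer i = 1, the vertical page j, and the vertical layer k. -/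
theorem det3_laplace_first_layer {F : Type*} [Field F]
    (A : Fin 3 → Fin 3 → Fin 3 → F) :
    det3 A = ∑ j : Fin 3, ∑ k : Fin 3,
      (-1 : F) ^ ((j : ℕ) + (k : ℕ)) * A 0 j k *
        det2 (fun i' j' k' => A i'.succ (j.succAbove j') (k.succAbove k')) := by
  simp [det3, det2, Fin.sum_univ_succ, Fin.succAbove]
  ring
end
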